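/- Let m ≥ 2 be an integer and let h be the (2m+1)-dimensional Heisenberg Lie algebra over a field F, i.e. a Lie algebra with basis e₁, …, e_{2m+1} whose only nonzero brackets among basis vectors are ⁅e_i, e_{i+m}⁆ = e_{2m+1} = −⁅e_{i+m}, e_i⁆ for 1 ≤ i ≤ m (all other brackets of basis vectors vanish). Then the commuting graph Γ(h) is connected and diam(Γ(h)) = 2. -/

import Mathlib

/-- The commuting graph of a Lie algebra `L` over `F`: vertices are the elements of
`L` outside the center, and two distinct vertices are adjacent iff they commute. -/
def commutingGraph (F : Type*) [CommRing F] (L : Type*) [LieRing L] [LieAlgebra F L] :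
    SimpleGraph {x : L // x ∉ LieAlgebra.center F L} where
  Adj x y := x ≠ y ∧ ⁅(x : L), (y : L)⁆ = 0
  symm := ⟨fun x y h => ⟨h.1.symm, by rw [← lie_skew, h.2, neg_zero]⟩⟩
  loopless := ⟨fun x h => h.1 rfl⟩

section Aux

variable {F : Type*} [Field F] {m : ℕ}
  {H : Type*} [LieRing H] [LieAlgebra F H]

/-- Structure constants of the Heisenberg algebra. -/
def hc (F : Type*) [Field F] (m : ℕ) (i j : Fin (2 * m + 1)) : F :=
  if (j : ℕ) = (i : ℕ) + m ∧ (i : ℕ) < m then 1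
  else if (i : ℕ) = (j : ℕ) + m ∧ (j : ℕ) < m then -1 else 0

/-- The symplectic-type bilinear form giving the bracket. -/
noncomputable def om (b : Module.Basis (Fin (2 * m + 1)) F H) (x y : H) : F :=
  ∑ i, ∑ j, b.repr x i * b.repr y j * hc F m i j

lemma sum_lie' {ι : Type*} (s : Finset ι) (f : ι → H) (y : H) :
    ⁅∑ i ∈ s, f i, y⁆ = ∑ i ∈ s, ⁅f i, y⁆ :=
  map_sum (AddMonoidHom.mk' (fun x => ⁅x, y⁆) (fun a b => add_lie a b y)) _ _

lemma lie_sum' {ι : Type*} (s : Finset ι) (f : ι → H) (y : H) :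
    ⁅y, ∑ i ∈ s, f i⁆ = ∑ i ∈ s, ⁅y, f i⁆ :=
  map_sum (AddMonoidHom.mk' (fun x => ⁅y, x⁆) (fun a b => lie_add y a b)) _ _

lemma hc_hi (i : Fin (2 * m + 1)) (k : ℕ) (hk : k < m) (hkm : k + m < 2 * m + 1) :
    hc F m i ⟨k + m, hkm⟩ = if (i : ℕ) = k then 1 else 0 := by
  unfold hc
  rcases eq_or_ne (i : ℕ) k with h | h
  · rw [if_pos ⟨by simp [h], by omega⟩, if_pos h]
  · rw [if_neg (by rintro ⟨h1, h2⟩; simp only [Fin.val_mk] at h1; omega),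
      if_neg (by rintro ⟨h1, h2⟩; simp only [Fin.val_mk] at h2; omega), if_neg h]

lemma hc_lo (i : Fin (2 * m + 1)) (k : ℕ) (hk : k < m) (hkm : k < 2 * m + 1) :
    hc F m i ⟨k, hkm⟩ = if (i : ℕ) = k + m then -1 else 0 := by
  unfold hc
  rcases eq_or_ne (i : ℕ) (k + m) with h | h
  · rw [if_neg (by rintro ⟨h1, h2⟩; simp only [Fin.val_mk] at h1; omega),
      if_pos ⟨by simpa using h, hk⟩, if_pos h]
  · rw [if_neg (by rintro ⟨h1, h2⟩; simp only [Fin.val_mk] at h1; omega),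
      if_neg (by rintro ⟨h1, h2⟩; simp only [Fin.val_mk] at h1; omega), if_neg h]

variable (b : Module.Basis (Fin (2 * m + 1)) F H)

/-- `om b x ·` as a linear map. -/
noncomputable def omL (x : H) : H →ₗ[F] F where
  toFun y := om b x y
  map_add' y z := by
    simp only [om, map_add, Finsupp.add_apply, ← Finset.sum_add_distrib]
    exact Finset.sum_congr rfl fun i _ => Finset.sum_congr rfl fun j _ => by ring
  map_smul' t y := by
    simp only [om, map_smul, Finsupp.smul_apply, smul_eq_mul, RingHom.id_apply, Finset.mul_sum]
    exact Finset.sum_congr rfl fun i _ => Finset.sum_congr rfl fun j _ => by ring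

@[simp] lemma omL_apply (x y : H) : omL b x y = om b x y := rfl

lemma om_basis_right (x : H) (j : Fin (2 * m + 1)) :
    om b x (b j) = ∑ i, b.repr x i * hc F m i j := by
  unfold om
  refine Finset.sum_congr rfl fun i _ => ?_
  rw [Finset.sum_eq_single j]
  · simp
  · intro k _ hk
    simp [Module.Basis.repr_self, Finsupp.single_apply, Ne.symm hk]
  · simp

lemma om_col_hi (x : H) (k : ℕ) (hk : k < m) (hkm : k + m < 2 * m + 1)
    (hkk : k < 2 * m + 1) :
    om b x (b ⟨k + m, hkm⟩) = b.repr x ⟨k, hkk⟩ := by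
  rw [om_basis_right, Finset.sum_eq_single (⟨k, hkk⟩ : Fin (2 * m + 1))]
  · rw [hc_hi _ _ hk, if_pos rfl, mul_one]
  · intro i _ hik
    rw [hc_hi _ _ hk, if_neg (fun h => hik (Fin.ext h)), mul_zero]
  · simp

lemma om_col_lo (x : H) (k : ℕ) (hk : k < m) (hkm : k + m < 2 * m + 1)
    (hkk : k < 2 * m + 1) :
    om b x (b ⟨k, hkk⟩) = - b.repr x ⟨k + m, hkm⟩ := by
  rw [om_basis_right, Finset.sum_eq_single (⟨k + m, hkm⟩ : Fin (2 * m + 1))]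
  · rw [hc_lo _ _ hk, if_pos rfl, mul_neg, mul_one]
  · intro i _ hik
    rw [hc_lo _ _ hk, if_neg (fun h => hik (Fin.ext h)), mul_zero]
  · simp

variable (hbr1 : ∀ i j : Fin (2 * m + 1), (j : ℕ) = (i : ℕ) + m → (i : ℕ) < m →
      ⁅b i, b j⁆ = b (Fin.last (2 * m)))
variable (hbr2 : ∀ i j : Fin (2 * m + 1), ¬ ((j : ℕ) = (i : ℕ) + m ∧ (i : ℕ) < m) →
      ¬ ((i : ℕ) = (j : ℕ) + m ∧ (j : ℕ) < m) → ⁅b i, b j⁆ = 0)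

include hbr1 hbr2

lemma lieb (i j : Fin (2 * m + 1)) : ⁅b i, b j⁆ = hc F m i j • b (Fin.last (2 * m)) := by
  unfold hc
  by_cases h1 : (j : ℕ) = (i : ℕ) + m ∧ (i : ℕ) < m
  · rw [if_pos h1, one_smul, hbr1 i j h1.1 h1.2]
  · rw [if_neg h1]
    by_cases h2 : (i : ℕ) = (j : ℕ) + m ∧ (j : ℕ) < m
    · rw [if_pos h2, ← lie_skew, hbr1 j i h2.1 h2.2, neg_smul, one_smul]
    · rw [if_neg h2, zero_smul, hbr2 i j h1 h2]

lemma lie_eq (x y : H) : ⁅x, y⁆ = om b x y • b (Fin.last (2 * m)) := by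
  conv_lhs => rw [← b.sum_repr x, ← b.sum_repr y]
  rw [sum_lie', om, Finset.sum_smul]
  refine Finset.sum_congr rfl fun i _ => ?_
  rw [smul_lie, lie_sum', Finset.smul_sum, Finset.sum_smul]
  refine Finset.sum_congr rfl fun j _ => ?_
  rw [lie_smul, lieb b hbr1 hbr2, smul_smul, smul_smul, mul_assoc]

lemma center_le_span (x : H) (hx : x ∈ LieAlgebra.center F H) :
    x ∈ Submodule.span F {b (Fin.last (2 * m))} := by
  have hz : b (Fin.last (2 * m)) ≠ 0 := b.ne_zero _
  have hlie : ∀ y : H, ⁅x, y⁆ = 0 := by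
    intro y
    have h := (LieModule.mem_maxTrivSubmodule F H H x).mp hx y
    rw [← lie_skew, h, neg_zero]
  have hom : ∀ y : H, om b x y = 0 := by
    intro y
    have h := lie_eq b hbr1 hbr2 x y
    rw [hlie y] at h
    rcases smul_eq_zero.mp h.symm with h' | h'
    · exact h'
    · exact absurd h' hz
  have hco : ∀ i : Fin (2 * m + 1), (i : ℕ) < 2 * m → b.repr x i = 0 := by
    intro i hi
    rcases lt_or_ge (i : ℕ) m with h | h
    · have h2 := hom (b ⟨(i : ℕ) + m, by omega⟩)
      rw [om_col_hi b x (i : ℕ) h (by omega) i.isLt] at h2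
      simpa using h2
    · have h2 := hom (b ⟨(i : ℕ) - m, by omega⟩)
      rw [om_col_lo b x ((i : ℕ) - m) (by omega) (by omega) (by omega)] at h2
      have he : (⟨(i : ℕ) - m + m, by omega⟩ : Fin (2 * m + 1)) = i := Fin.ext (by simp; omega)
      rw [he, neg_eq_zero] at h2
      exact h2
  have hx2 : x = b.repr x (Fin.last (2 * m)) • b (Fin.last (2 * m)) := by
    conv_lhs => rw [← b.sum_repr x]
    rw [Finset.sum_eq_single (Fin.last (2 * m))]
    · intro i _ hi
      rw [hco i (by
        have h1 := i.isLt
        have h2 : (i : ℕ) ≠ 2 * m := fun h => hi (Fin.ext (by simp [h, Fin.last]))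
        omega), zero_smul]
    · simp
  rw [hx2]
  exact Submodule.smul_mem _ _ (Submodule.mem_span_singleton_self _)

lemma exists_mid (hm : 2 ≤ m) (x y : H) (hxy : ⁅x, y⁆ ≠ 0) :
    ∃ w : H, w ∉ Submodule.span F ({b (Fin.last (2 * m))} : Set H) ∧ w ≠ x ∧ w ≠ y ∧
      ⁅x, w⁆ = 0 ∧ ⁅y, w⁆ = 0 := by
  classical
  haveI : FiniteDimensional F H := Module.Finite.of_basis b
  have hz : b (Fin.last (2 * m)) ≠ 0 := b.ne_zero _
  set T : H →ₗ[F] F × F := (omL b x).prod (omL b y) with hT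
  have hrank := LinearMap.finrank_range_add_finrank_ker T
  have hfr : Module.finrank F H = 2 * m + 1 := by
    rw [Module.finrank_eq_card_basis b, Fintype.card_fin]
  have hr2 : Module.finrank F (LinearMap.range T) ≤ 2 := by
    have h := Submodule.finrank_le (LinearMap.range T)
    simpa using h
  have hker : 3 ≤ Module.finrank F (LinearMap.ker T) := by omega
  set S := Submodule.span F ({b (Fin.last (2 * m)), x, y} : Set H) with hS
  have hSr : Module.finrank F S ≤ 3 := by
    refine (finrank_span_le_card _).trans ?_
    have he : ({b (Fin.last (2 * m)), x, y} : Set H).toFinset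
        = insert (b (Fin.last (2 * m))) (insert x {y}) := by simp
    rw [he]
    refine (Finset.card_insert_le _ _).trans ?_
    have := Finset.card_insert_le x ({y} : Finset H)
    simp only [Finset.card_singleton] at this ⊢
    omega
  have hxS : x ∈ S := Submodule.subset_span (by simp)
  have hyS : y ∈ S := Submodule.subset_span (by simp)
  have hzS : Submodule.span F ({b (Fin.last (2 * m))} : Set H) ≤ S :=
    Submodule.span_mono (by simp)
  have homyx : om b y x ≠ 0 := by
    intro h0
    have h := lie_eq b hbr1 hbr2 y x
    rw [h0, zero_smul] at h
    exact hxy (by rw [← neg_eq_zero, ← lie_skew, h]; simp)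
  have hxK : x ∉ LinearMap.ker T := by
    intro hmem
    have h := LinearMap.mem_ker.mp hmem
    have h2 : om b y x = 0 := congrArg Prod.snd h
    exact homyx h2
  have hnot : ¬ (LinearMap.ker T ≤ S) := by
    intro hle
    have heq : LinearMap.ker T = S := Submodule.eq_of_le_of_finrank_le hle (hSr.trans hker)
    exact hxK (heq ▸ hxS)
  obtain ⟨w, hwK, hwS⟩ := SetLike.not_le_iff_exists.mp hnot
  have hTw := LinearMap.mem_ker.mp hwK
  have h1 : om b x w = 0 := congrArg Prod.fst hTw
  have h2 : om b y w = 0 := congrArg Prod.snd hTw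
  exact ⟨w, fun h => hwS (hzS h), fun h => hwS (h ▸ hxS), fun h => hwS (h ▸ hyS),
    by rw [lie_eq b hbr1 hbr2 x w, h1, zero_smul],
    by rw [lie_eq b hbr1 hbr2 y w, h2, zero_smul]⟩

end Aux

/-- for `m ≥ 2`, the `(2m+1)`-dimensional Heisenberg Lie algebra — given by a
basis `e₀, …, e_{2m}` whose only nonzero brackets among basis vectors are
`⁅eᵢ, e_{i+m}⁆ = e_{2m} = -⁅e_{i+m}, eᵢ⁆` for `i < m` — has a connected commuting graph of
diameter 2. -/
theorem stmt14 (F : Type*) [Field F] (m : ℕ) (hm : 2 ≤ m)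
    (H : Type*) [LieRing H] [LieAlgebra F H]
    (b : Module.Basis (Fin (2 * m + 1)) F H)
    (hbr1 : ∀ i j : Fin (2 * m + 1), (j : ℕ) = (i : ℕ) + m → (i : ℕ) < m →
      ⁅b i, b j⁆ = b (Fin.last (2 * m)))
    (hbr2 : ∀ i j : Fin (2 * m + 1), ¬ ((j : ℕ) = (i : ℕ) + m ∧ (i : ℕ) < m) →
      ¬ ((i : ℕ) = (j : ℕ) + m ∧ (j : ℕ) < m) → ⁅b i, b j⁆ = 0) :
    (commutingGraph F H).Connected ∧ (commutingGraph F H).ediam = 2 := by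
  have hz : b (Fin.last (2 * m)) ≠ 0 := b.ne_zero _
  set G := commutingGraph F H with hG
  -- the two basis vectors b 0, b m
  set i0 : Fin (2 * m + 1) := ⟨0, by omega⟩ with hi0
  set im : Fin (2 * m + 1) := ⟨m, by omega⟩ with him
  have hb0m : ⁅b i0, b im⁆ = b (Fin.last (2 * m)) := hbr1 i0 im (by simp [hi0, him]) (by simp [hi0]; omega)
  have hnc0 : b i0 ∉ LieAlgebra.center F H := by
    intro h
    have h2 := (LieModule.mem_maxTrivSubmodule F H H (b i0)).mp h (b im)
    rw [← lie_skew, hb0m] at h2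
    exact hz (by rwa [neg_eq_zero] at h2)
  have hncm : b im ∉ LieAlgebra.center F H := by
    intro h
    have h2 := (LieModule.mem_maxTrivSubmodule F H H (b im)).mp h (b i0)
    rw [hb0m] at h2
    exact hz h2
  set u0 : {x : H // x ∉ LieAlgebra.center F H} := ⟨b i0, hnc0⟩ with hu0
  set v0 : {x : H // x ∉ LieAlgebra.center F H} := ⟨b im, hncm⟩ with hv0
  -- every pair of vertices is at distance ≤ 2
  have hle2 : ∀ u v : {x : H // x ∉ LieAlgebra.center F H}, G.edist u v ≤ 2 := by
    intro u v
    rcases eq_or_ne u v with h | hne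
    · subst h; simp
    by_cases hc0 : ⁅(u : H), (v : H)⁆ = 0
    · have hadj : G.Adj u v := ⟨hne, hc0⟩
      rw [SimpleGraph.edist_eq_one_iff_adj.mpr hadj]
      norm_num
    · obtain ⟨w, hwz, hwx, hwy, hxw, hyw⟩ := exists_mid b hbr1 hbr2 hm (u : H) (v : H) hc0
      have hwc : w ∉ LieAlgebra.center F H := fun h => hwz (center_le_span b hbr1 hbr2 w h)
      set ww : {x : H // x ∉ LieAlgebra.center F H} := ⟨w, hwc⟩ with hww
      have hadj1 : G.Adj u ww := by
        refine ⟨fun h => hwx (congrArg Subtype.val h).symm, ?_⟩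
        exact hxw
      have hadj2 : G.Adj ww v := by
        refine ⟨fun h => hwy (congrArg Subtype.val h), ?_⟩
        have h2 : ⁅w, (v : H)⁆ = 0 := by rw [← lie_skew, hyw, neg_zero]
        exact h2
      have hwalk : (SimpleGraph.Walk.cons hadj1 (SimpleGraph.Walk.cons hadj2
          SimpleGraph.Walk.nil)).length = 2 := by simp
      have := SimpleGraph.edist_le (SimpleGraph.Walk.cons hadj1
        (SimpleGraph.Walk.cons hadj2 SimpleGraph.Walk.nil))
      rw [hwalk] at this
      exact_mod_cast this
  have hconn : G.Connected := by
    haveI : Nonempty {x : H // x ∉ LieAlgebra.center F H} := ⟨u0⟩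
    refine ⟨fun u v => ?_⟩
    refine SimpleGraph.reachable_of_edist_ne_top ?_
    intro h
    have h2 := hle2 u v
    rw [h] at h2
    exact absurd h2 (by simp)
  refine ⟨hconn, le_antisymm (SimpleGraph.ediam_le_of_edist_le hle2) ?_⟩
  -- lower bound: u0 and v0 are at distance ≥ 2
  have hne : u0 ≠ v0 := by
    intro h
    have h2 : b i0 = b im := congrArg Subtype.val h
    have h3 : i0 = im := b.injective h2
    have h4 : (i0 : ℕ) = (im : ℕ) := congrArg Fin.val h3
    simp [hi0, him] at h4
    omega
  have hnadj : ¬ G.Adj u0 v0 := by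
    rintro ⟨-, h2⟩
    rw [hb0m] at h2
    exact hz h2
  have h0 : G.edist u0 v0 ≠ 0 := by
    simp only [ne_eq, SimpleGraph.edist_eq_zero_iff]
    exact hne
  have h1 : G.edist u0 v0 ≠ 1 := fun h => hnadj (SimpleGraph.edist_eq_one_iff_adj.mp h)
  have hlt : 1 < G.edist u0 v0 :=
    lt_of_le_of_ne (Order.one_le_iff_pos.mpr (pos_iff_ne_zero.mpr h0)) (Ne.symm h1)
  have h2le : (2 : ℕ∞) ≤ G.edist u0 v0 := by
    rw [← one_add_one_eq_two]
    exact Order.add_one_le_of_lt hlt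
  exact h2le.trans SimpleGraph.edist_le_ediam
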